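/- If all three indices i, j, k are odd (and 1 < i, j, k ≤ n), then ⟨r_i, r_j, r_k⟩ is a proper subgroup of Sym_n for n ≥ 3: every element of this subgroup maps odd positions to odd positions and even positions to even positions. -/

import Mathlib

/-- The prefix reversal `r i` on positions `1..n` (0-indexed as `Fin n`):
position `x+1 ↦ i+1-(x+1)` for `x+1 ≤ i`, i.e. `x ↦ i-1-x` for `x < i`, fixing the rest. -/
def pr (n i : ℕ) : Equiv.Perm (Fin n) :=
  Function.Involutive.toPerm
    (fun x => if h : x.val < i ∧ i ≤ n then ⟨i - 1 - x.val, by omega⟩ else x)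
    (by
      intro x
      apply Fin.ext
      dsimp only
      split_ifs with h1 h2 h3 <;> simp_all <;> omega)

/-- The subgroup of parity-preserving permutations. -/
def paritySub (n : ℕ) : Subgroup (Equiv.Perm (Fin n)) where
  carrier := {g | ∀ x : Fin n, (g x).val % 2 = x.val % 2}
  one_mem' := by intro x; rfl
  mul_mem' := by
    intro a b ha hb x
    simp only [Equiv.Perm.mul_apply]
    rw [ha, hb]
  inv_mem' := by
    intro a ha x
    have := ha (a⁻¹ x)
    rw [show a (a⁻¹ x) = x from a.apply_symm_apply x] at this; exact this.symm

lemma pr_mem_parity (n i : ℕ) (hoi : Odd i) : pr n i ∈ paritySub n := by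
  intro x
  show ((Function.Involutive.toPerm _ _) x).val % 2 = x.val % 2
  simp only [Function.Involutive.toPerm, Equiv.coe_fn_mk]
  split_ifs with h
  · obtain ⟨m, hm⟩ := hoi
    simp only []
    omega
  · rfl

theorem stmt5 (n i j k : ℕ) (hn : 3 ≤ n)
    (hi : 1 < i) (hi' : i ≤ n) (hj : 1 < j) (hj' : j ≤ n) (hk : 1 < k) (hk' : k ≤ n)
    (hoi : Odd i) (hoj : Odd j) (hok : Odd k) :
    (∀ g ∈ Subgroup.closure ({pr n i, pr n j, pr n k} : Set (Equiv.Perm (Fin n))),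
      ∀ x : Fin n, ((g x).val + 1) % 2 = (x.val + 1) % 2) ∧
    Subgroup.closure ({pr n i, pr n j, pr n k} : Set (Equiv.Perm (Fin n))) ≠ ⊤ := by
  have hle : Subgroup.closure ({pr n i, pr n j, pr n k} : Set (Equiv.Perm (Fin n)))
      ≤ paritySub n := by
    rw [Subgroup.closure_le]
    intro g hg
    rcases hg with h | h | h <;> subst h
    · exact pr_mem_parity n i hoi
    · exact pr_mem_parity n j hoj
    · exact pr_mem_parity n k hok
  constructor
  · intro g hg x
    have := hle hg x
    omega
  · intro htop
    have h01 : Equiv.swap (⟨0, by omega⟩ : Fin n) ⟨1, by omega⟩ ∈ paritySub n := by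
      apply hle
      rw [htop]; trivial
    have := h01 ⟨0, by omega⟩
    rw [Equiv.swap_apply_left] at this
    simp at this
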